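/- Let C be a chain complex over a coefficient field k₀ = F_p, and suppose (x_n)_{n≥1} is a sequence of cycles in a differential graded coalgebra (C, δ, Δ) such that the reduced coproduct satisfies Δ̄ x_n = Σ_{n₁+n₂=n, n₁,n₂≥1} x_{n₁} ⊗ x_{n₂} in homology, and the homology class of x₁ is nonzero. Then by induction the homology class of x_n is nonzero for all n ≥ 1. -/

import Mathlib

/-!
STATEMENT 4: If cycles `x_n` in a DG coalgebra over `F_p` satisfy, in homology,
`Δ̄ [x_n] = Σ_{n₁+n₂=n} [x_{n₁}] ⊗ [x_{n₂}]`, the classes lie in independent (bi)graded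
components, and `[x₁] ≠ 0`, then `[x_n] ≠ 0` for all `n ≥ 1`.
Homology is presented via a linear map `cls` on cycles whose kernel is the boundaries.
-/

open scoped TensorProduct

/-- Over a field, if `a ⊗ b = 0` and `a ≠ 0` then `b = 0`. -/
lemma aux_tmul_eq_zero {k H : Type} [Field k] [AddCommGroup H] [Module k H]
    {a b : H} (h : a ⊗ₜ[k] b = 0) (ha : a ≠ 0) : b = 0 := by
  have hx : a ∉ (⊥ : Submodule k H) := by simpa using ha
  obtain ⟨f, hf, -⟩ := Submodule.exists_dual_map_eq_bot_of_notMem hx inferInstance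
  have := congrArg (fun t => TensorProduct.lid k H (LinearMap.rTensor H f t)) h
  simp only [LinearMap.rTensor_tmul, map_zero, TensorProduct.lid_tmul] at this
  exact (smul_eq_zero.mp this).resolve_left hf

/-- From independence, a projection fixing `G 1` and killing all `G j`, `j ≠ 1`. -/
lemma aux_proj {k H : Type} [Field k] [AddCommGroup H] [Module k H]
    (G : ℕ → Submodule k H) (hG : iSupIndep G) :
    ∃ π : H →ₗ[k] H, (∀ v ∈ G 1, π v = v) ∧ ∀ j ≠ 1, ∀ v ∈ G j, π v = 0 := by
  set W : Submodule k H := ⨆ j ≠ 1, G j with hW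
  have hdis : Disjoint (G 1) W := hG 1
  obtain ⟨c, hc⟩ := Submodule.exists_isCompl (G 1 ⊔ W)
  have hcompl : IsCompl (G 1) (W ⊔ c) :=
    Disjoint.isCompl_sup_right_of_isCompl_sup_left hdis hc
  refine ⟨(G 1).subtype ∘ₗ Submodule.projectionOnto _ _ hcompl, ?_, ?_⟩
  · intro v hv
    exact congrArg ((G 1).subtype)
      (Submodule.projectionOnto_apply_left hcompl ⟨v, hv⟩)
  · intro j hj v hv
    have hvW : v ∈ W ⊔ c := by
      refine Submodule.mem_sup_left ?_
      exact Submodule.mem_iSup_of_mem j (Submodule.mem_iSup_of_mem hj hv)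
    simp [Submodule.projectionOnto_apply_of_mem_right hcompl hvW]

theorem stmt4 (p : ℕ) [Fact p.Prime] {C H : Type}
    [AddCommGroup C] [Module (ZMod p) C] [AddCommGroup H] [Module (ZMod p) H]
    (d : C →ₗ[ZMod p] C) (hd2 : ∀ x, d (d x) = 0)
    (cls : LinearMap.ker d →ₗ[ZMod p] H)
    (hcls : ∀ z : LinearMap.ker d, cls z = 0 ↔ (z : C) ∈ LinearMap.range d)
    (G : ℕ → Submodule (ZMod p) H) (hG : iSupIndep G)
    (Δ : H →ₗ[ZMod p] H ⊗[ZMod p] H)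
    (x : ℕ → LinearMap.ker d)
    (hxG : ∀ n, 1 ≤ n → cls (x n) ∈ G n)
    (hΔ : ∀ n, 1 ≤ n →
      Δ (cls (x n)) = ∑ i ∈ Finset.Ioo 0 n, cls (x i) ⊗ₜ[ZMod p] cls (x (n - i)))
    (h1 : ¬ ((x 1 : C) ∈ LinearMap.range d)) :
    ∀ n, 1 ≤ n → ¬ ((x n : C) ∈ LinearMap.range d) := by
  obtain ⟨π, hπ1, hπ0⟩ := aux_proj G hG
  suffices h : ∀ n, 1 ≤ n → cls (x n) ≠ 0 by
    intro n hn hmem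
    exact h n hn ((hcls (x n)).mpr hmem)
  intro n
  induction n using Nat.strong_induction_on with
  | _ n ih =>
    intro hn hzero
    rcases eq_or_lt_of_le hn with h | h
    · exact h1 ((hcls (x 1)).mp (h ▸ hzero))
    -- n ≥ 2
    have h2 : 2 ≤ n := h
    have hsum : (∑ i ∈ Finset.Ioo 0 n, cls (x i) ⊗ₜ[ZMod p] cls (x (n - i))) = 0 := by
      rw [← hΔ n hn, hzero, map_zero]
    have hmap := congrArg (LinearMap.rTensor H π) hsum
    rw [map_sum, map_zero] at hmap
    have hone : (1 : ℕ) ∈ Finset.Ioo 0 n := by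
      simp [Finset.mem_Ioo]; omega
    rw [Finset.sum_eq_single_of_mem 1 hone] at hmap
    · rw [LinearMap.rTensor_tmul, hπ1 _ (hxG 1 le_rfl)] at hmap
      have hc1 : cls (x 1) ≠ 0 := fun hq => h1 ((hcls (x 1)).mp hq)
      have := aux_tmul_eq_zero hmap hc1
      exact ih (n - 1) (by omega) (by omega) this
    · intro i hi hne
      rw [LinearMap.rTensor_tmul,
        hπ0 i hne _ (hxG i (Finset.mem_Ioo.mp hi).1), TensorProduct.zero_tmul]
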